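/- For integers N ≥ L ≥ 1 and real a, (Na)_L / (N)_L - a^L = \sum_{j=1}^{L-1} (a-1)^j a^{L-j} \sum_{1 ≤ i_1 < ... < i_j ≤ L-1} (i_1 ... i_j) / ((N - i_1)...(N - i_j)), where (x)_k = x(x-1)...(x-k+1) denotes the falling factorial. -/

import Mathlib

/-- The falling factorial `x(x-1)⋯(x-k+1)` of a real number. -/
def fallingFactorial (x : ℝ) (k : ℕ) : ℝ := ∏ i ∈ Finset.range k, (x - i)

/-- For integers `N ≥ L ≥ 1` and real `a`,
`(Na)_L/(N)_L - a^L = ∑_{j=1}^{L-1} (a-1)^j a^{L-j}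
  ∑_{1 ≤ i₁ < ⋯ < i_j ≤ L-1} (i₁⋯i_j)/((N-i₁)⋯(N-i_j))`. -/
theorem fallingFactorial_ratio_expansion (N L : ℕ) (hL : 1 ≤ L) (hNL : L ≤ N) (a : ℝ) :
    fallingFactorial ((N : ℝ) * a) L / fallingFactorial (N : ℝ) L - a ^ L =
      ∑ j ∈ Finset.Icc 1 (L - 1), (a - 1) ^ j * a ^ (L - j) *
        ∑ s ∈ Finset.powersetCard j (Finset.Icc 1 (L - 1)),
          ∏ i ∈ s, (i : ℝ) / ((N : ℝ) - i) := by
  have hne : ∀ i ∈ Finset.range L, ((N:ℝ) - i) ≠ 0 := by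
    intro i hi
    have h1 : i < N := lt_of_lt_of_le (Finset.mem_range.mp hi) hNL
    have h2 : (i:ℝ) < N := by exact_mod_cast h1
    intro h; linarith
  have h1 : fallingFactorial ((N : ℝ) * a) L / fallingFactorial (N : ℝ) L
      = ∏ i ∈ Finset.range L, ((a-1) * ((i:ℝ)/((N:ℝ)-i)) + a) := by
    rw [fallingFactorial, fallingFactorial, ← Finset.prod_div_distrib]
    refine Finset.prod_congr rfl fun i hi => ?_
    have h := hne i hi
    field_simp
    ring
  have hsplit : Finset.range L = insert 0 (Finset.Icc 1 (L-1)) := by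
    ext x; simp only [Finset.mem_range, Finset.mem_insert, Finset.mem_Icc]; omega
  have h2 : ∏ i ∈ Finset.range L, ((a-1) * ((i:ℝ)/((N:ℝ)-i)) + a)
      = a * ∏ i ∈ Finset.Icc 1 (L-1), ((a-1) * ((i:ℝ)/((N:ℝ)-i)) + a) := by
    rw [hsplit, Finset.prod_insert (by simp)]
    norm_num
  have hcard : (Finset.Icc 1 (L-1)).card = L - 1 := by rw [Nat.card_Icc]; omega
  have hexp : ∏ i ∈ Finset.Icc 1 (L-1), ((a-1) * ((i:ℝ)/((N:ℝ)-i)) + a)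
      = ∑ j ∈ Finset.range L, (a-1)^j * a^(L-1-j) *
          ∑ s ∈ Finset.powersetCard j (Finset.Icc 1 (L-1)), ∏ i ∈ s, (i:ℝ)/((N:ℝ)-i) := by
    rw [Finset.prod_add, Finset.sum_powerset, hcard, show L - 1 + 1 = L from by omega]
    refine Finset.sum_congr rfl fun j hj => ?_
    rw [Finset.mul_sum]
    refine Finset.sum_congr rfl fun t ht => ?_
    obtain ⟨hts, htc⟩ := Finset.mem_powersetCard.mp ht
    rw [Finset.prod_mul_distrib, Finset.prod_const, htc,
        Finset.prod_const, Finset.card_sdiff_of_subset hts, hcard, htc]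
    ring
  rw [h1, h2, hexp, Finset.mul_sum, hsplit, Finset.sum_insert (by simp)]
  have hz : a * ((a-1)^0 * a^(L-1-0) *
      ∑ s ∈ Finset.powersetCard 0 (Finset.Icc 1 (L-1)), ∏ i ∈ s, (i:ℝ)/((N:ℝ)-i)) = a^L := by
    rw [Finset.powersetCard_zero]
    simp only [pow_zero, one_mul, Nat.sub_zero, Finset.sum_singleton, Finset.prod_empty, mul_one]
    rw [← pow_succ']
    congr 1
    omega
  rw [hz, add_sub_cancel_left]
  refine Finset.sum_congr rfl fun j hj => ?_
  have hj' : 1 ≤ j ∧ j ≤ L - 1 := Finset.mem_Icc.mp hj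
  have h3 : a * a^(L-1-j) = a^(L-j) := by
    rw [← pow_succ']
    congr 1
    omega
  rw [← h3]; ring
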